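/- Let n ≥ 2 and regard ℍⁿ (n-tuples of real quaternions) as a finite-dimensional real vector space. Then the set of pairs (X,Y) ∈ ℍⁿ × ℍⁿ for which the eight vectors X, i·X, j·X, k·X, Y, i·Y, j·Y, k·Y are linearly independent over ℝ (equivalently, the real span of {X, iX, jX, kX} plus the real span of {Y, iY, jY, kY} has dimension 8) is open and dense in ℍⁿ × ℍⁿ. In other words, the almost quaternionic structure A = span_ℝ{id, L_i, L_j, L_k} of scalar multiplications on ℍⁿ is of generic rank four. -/

import Mathlib

open Quaternion

/-- Componentwise quaternion scalar multiplication on `ℍⁿ`. -/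
noncomputable def qsmul {n : ℕ} (q : ℍ[ℝ]) (X : Fin n → ℍ[ℝ]) : Fin n → ℍ[ℝ] :=
  fun m => q * X m

/-- The imaginary quaternion units `i`, `j`, `k`. -/
def qi : ℍ[ℝ] := ⟨0, 1, 0, 0⟩
def qj : ℍ[ℝ] := ⟨0, 0, 1, 0⟩
def qk : ℍ[ℝ] := ⟨0, 0, 0, 1⟩

namespace Stmt11Aux

variable {n : ℕ}

section ConsEval
variable {α : Type*} (x0 x1 x2 x3 x4 x5 x6 x7 : α)

@[simp] lemma cons8_0 : ![x0,x1,x2,x3,x4,x5,x6,x7] (0 : Fin 8) = x0 := rfl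
@[simp] lemma cons8_1 : ![x0,x1,x2,x3,x4,x5,x6,x7] (1 : Fin 8) = x1 := rfl
@[simp] lemma cons8_2 : ![x0,x1,x2,x3,x4,x5,x6,x7] (2 : Fin 8) = x2 := rfl
@[simp] lemma cons8_3 : ![x0,x1,x2,x3,x4,x5,x6,x7] (3 : Fin 8) = x3 := rfl
@[simp] lemma cons8_4 : ![x0,x1,x2,x3,x4,x5,x6,x7] (4 : Fin 8) = x4 := rfl
@[simp] lemma cons8_5 : ![x0,x1,x2,x3,x4,x5,x6,x7] (5 : Fin 8) = x5 := rfl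
@[simp] lemma cons8_6 : ![x0,x1,x2,x3,x4,x5,x6,x7] (6 : Fin 8) = x6 := rfl
@[simp] lemma cons8_7 : ![x0,x1,x2,x3,x4,x5,x6,x7] (7 : Fin 8) = x7 := rfl

end ConsEval


/-- `qsmul q` as a real-linear map. -/
noncomputable def qsmulₗ (q : ℍ[ℝ]) : (Fin n → ℍ[ℝ]) →ₗ[ℝ] (Fin n → ℍ[ℝ]) where
  toFun := qsmul q
  map_add' X Y := by funext m; simp [qsmul, mul_add]
  map_smul' r X := by funext m; simp [qsmul, mul_smul_comm]

/-- The eight real coordinates at positions `i0`, `i1`. -/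
def Φ (i0 i1 : Fin n) : (Fin n → ℍ[ℝ]) →ₗ[ℝ] (Fin 8 → ℝ) where
  toFun X := ![(X i0).re, (X i0).imI, (X i0).imJ, (X i0).imK,
               (X i1).re, (X i1).imI, (X i1).imJ, (X i1).imK]
  map_add' X Y := by funext b; fin_cases b <;> rfl
  map_smul' r X := by funext b; fin_cases b <;> rfl

/-- The eight linear maps producing `X, iX, jX, kX, Y, iY, jY, kY` from `(X,Y)`. -/
noncomputable def vℓ (n : ℕ) : Fin 8 → ((Fin n → ℍ[ℝ]) × (Fin n → ℍ[ℝ])) →ₗ[ℝ] (Fin n → ℍ[ℝ]) :=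
  ![LinearMap.fst ℝ _ _,
    (qsmulₗ qi).comp (LinearMap.fst ℝ _ _),
    (qsmulₗ qj).comp (LinearMap.fst ℝ _ _),
    (qsmulₗ qk).comp (LinearMap.fst ℝ _ _),
    LinearMap.snd ℝ _ _,
    (qsmulₗ qi).comp (LinearMap.snd ℝ _ _),
    (qsmulₗ qj).comp (LinearMap.snd ℝ _ _),
    (qsmulₗ qk).comp (LinearMap.snd ℝ _ _)]

/-- Determinant of the 8×8 matrix of coordinates at positions `i0, i1`. -/
noncomputable def g (i0 i1 : Fin n) (p : (Fin n → ℍ[ℝ]) × (Fin n → ℍ[ℝ])) : ℝ :=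
  (Matrix.of fun a b : Fin 8 => Φ i0 i1 (vℓ n a p) b).det

lemma vℓ_eq (p : (Fin n → ℍ[ℝ]) × (Fin n → ℍ[ℝ])) :
    (fun a => vℓ n a p) =
      ![p.1, qsmul qi p.1, qsmul qj p.1, qsmul qk p.1,
        p.2, qsmul qi p.2, qsmul qj p.2, qsmul qk p.2] := by
  funext a
  fin_cases a <;> rfl

lemma li_of_g_ne_zero {i0 i1 : Fin n} {p : (Fin n → ℍ[ℝ]) × (Fin n → ℍ[ℝ])}
    (h : g i0 i1 p ≠ 0) :
    LinearIndependent ℝ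
      ![p.1, qsmul qi p.1, qsmul qj p.1, qsmul qk p.1,
        p.2, qsmul qi p.2, qsmul qj p.2, qsmul qk p.2] := by
  have hM : LinearIndependent ℝ
      (fun a => (Matrix.of fun a b : Fin 8 => Φ i0 i1 (vℓ n a p) b) a) :=
    Matrix.linearIndependent_rows_iff_isUnit.2
      ((Matrix.isUnit_iff_isUnit_det _).2 (isUnit_iff_ne_zero.2 h))
  have hM' : LinearIndependent ℝ (fun a => Φ i0 i1 (vℓ n a p)) := hM
  rw [← vℓ_eq p]
  exact LinearIndependent.of_comp (Φ i0 i1) hM'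

lemma g_analytic (i0 i1 : Fin n) :
    AnalyticOnNhd ℝ (g i0 i1) Set.univ := by
  intro x _
  unfold g
  simp_rw [Matrix.det_apply']
  apply Finset.analyticAt_fun_sum
  intro σ _
  apply analyticAt_const.mul
  apply Finset.analyticAt_fun_prod
  intro a _
  have : (fun p : (Fin n → ℍ[ℝ]) × (Fin n → ℍ[ℝ]) =>
      Matrix.of (fun a b : Fin 8 => Φ i0 i1 (vℓ n a p) b) (σ a) a) =
      (LinearMap.toContinuousLinearMap
        ((LinearMap.proj a).comp ((Φ i0 i1).comp (vℓ n (σ a)))) : _ → ℝ) := rfl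
  rw [this]
  exact ContinuousLinearMap.analyticAt _ x


set_option maxHeartbeats 2000000 in
lemma g_witness {i0 i1 : Fin n} (h10 : i1 ≠ i0) (h01 : i0 ≠ i1) :
    g i0 i1 ((fun m => if m = i0 then 1 else 0), (fun m => if m = i1 then 1 else 0)) ≠ 0 := by
  have hmat : (Matrix.of fun a b : Fin 8 => Φ i0 i1
      (vℓ n a ((fun m => if m = i0 then 1 else 0), (fun m => if m = i1 then 1 else 0))) b) = 1 := by
    ext a b
    fin_cases a <;> fin_cases b <;>
      simp [Φ, vℓ, qsmulₗ, qsmul, h10, h01, Matrix.one_apply] <;> simp [qi, qj, qk]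
  have hu : IsUnit (Matrix.of fun a b : Fin 8 => Φ i0 i1
      (vℓ n a ((fun m => if m = i0 then 1 else 0), (fun m => if m = i1 then 1 else 0))) b) :=
    hmat ▸ isUnit_one
  exact ((Matrix.isUnit_iff_isUnit_det _).1 hu).ne_zero

end Stmt11Aux

set_option maxHeartbeats 2000000 in
open Stmt11Aux in
/-- for `n ≥ 2`, the set of pairs `(X,Y)` of vectors in `ℍⁿ` such that
`X, iX, jX, kX, Y, iY, jY, kY` are linearly independent over `ℝ` is open and dense;
i.e. the almost quaternionic structure on `ℍⁿ` has generic rank four. -/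
theorem stmt_11 (n : ℕ) (hn : 2 ≤ n) :
    IsOpen {p : (Fin n → ℍ[ℝ]) × (Fin n → ℍ[ℝ]) |
        LinearIndependent ℝ
          ![p.1, qsmul qi p.1, qsmul qj p.1, qsmul qk p.1,
            p.2, qsmul qi p.2, qsmul qj p.2, qsmul qk p.2]} ∧
      Dense {p : (Fin n → ℍ[ℝ]) × (Fin n → ℍ[ℝ]) |
        LinearIndependent ℝ
          ![p.1, qsmul qi p.1, qsmul qj p.1, qsmul qk p.1,
            p.2, qsmul qi p.2, qsmul qj p.2, qsmul qk p.2]} := by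
  constructor
  · have hc : Continuous (fun p : (Fin n → ℍ[ℝ]) × (Fin n → ℍ[ℝ]) =>
        ![p.1, qsmul qi p.1, qsmul qj p.1, qsmul qk p.1,
          p.2, qsmul qi p.2, qsmul qj p.2, qsmul qk p.2]) := by
      have he : (fun p : (Fin n → ℍ[ℝ]) × (Fin n → ℍ[ℝ]) =>
          ![p.1, qsmul qi p.1, qsmul qj p.1, qsmul qk p.1,
            p.2, qsmul qi p.2, qsmul qj p.2, qsmul qk p.2]) =
          fun p a => vℓ n a p := by
        funext p
        exact (vℓ_eq p).symm
      rw [he]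
      exact continuous_pi fun a => (LinearMap.toContinuousLinearMap (vℓ n a)).continuous
    exact isOpen_setOf_linearIndependent.preimage hc
  · -- density
    set i0 : Fin n := ⟨0, by omega⟩
    set i1 : Fin n := ⟨1, by omega⟩
    have h10 : i1 ≠ i0 := by simp [i0, i1, Fin.ext_iff]
    have h01 : i0 ≠ i1 := by simp [i0, i1, Fin.ext_iff]
    set p₀ : (Fin n → ℍ[ℝ]) × (Fin n → ℍ[ℝ]) :=
      (fun m => if m = i0 then 1 else 0, fun m => if m = i1 then 1 else 0) with hp₀
    have hgp₀ : g i0 i1 p₀ ≠ 0 := g_witness h10 h01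
    have hsub : {p : (Fin n → ℍ[ℝ]) × (Fin n → ℍ[ℝ]) | g i0 i1 p ≠ 0} ⊆
        {p : (Fin n → ℍ[ℝ]) × (Fin n → ℍ[ℝ]) |
          LinearIndependent ℝ
            ![p.1, qsmul qi p.1, qsmul qj p.1, qsmul qk p.1,
              p.2, qsmul qi p.2, qsmul qj p.2, qsmul qk p.2]} :=
      fun p hp => li_of_g_ne_zero hp
    refine Dense.mono hsub ?_
    rw [dense_iff_inter_open]
    rintro U hU ⟨x, hx⟩
    by_contra hemp
    have hzero : ∀ y ∈ U, g i0 i1 y = 0 := by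
      intro y hy
      by_contra hgy
      exact hemp ⟨y, hy, hgy⟩
    have hev : g i0 i1 =ᶠ[nhds x] (0 : ((Fin n → ℍ[ℝ]) × (Fin n → ℍ[ℝ])) → ℝ) :=
      Filter.eventually_of_mem (hU.mem_nhds hx) hzero
    have heq := (g_analytic i0 i1).eqOn_zero_of_preconnected_of_eventuallyEq_zero
      isPreconnected_univ (Set.mem_univ x) hev
    exact hgp₀ (heq (Set.mem_univ p₀))

-- axiom check
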